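/- Fix T > 0 and w ∈ ℝ^n, and let x be a maximal solution of the transformed system (quadODE). If the trajectory {x(s)} is bounded, then x is defined for all s ≥ 0 and converges, as s → ∞, to an equilibrium point of (quadODE). If the trajectory is unbounded, then x blows up in finite time (|x(s)| → ∞ as s approaches some finite time). -/

import Mathlib

open Filter Topology

set_option maxHeartbeats 1000000

noncomputable section

/-- `g_i(w) = (1/2) wᵀ π_i w + (A^C w)_i`. -/
def gfun {m n : ℕ} (π : Fin m → Matrix (Fin n) (Fin n) ℝ)
    (AC : Matrix (Fin m) (Fin n) ℝ) (w : Fin n → ℝ) (i : Fin m) : ℝ :=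
  (1 / 2) * (∑ j, ∑ k, w j * π i j k * w k) + ∑ j, AC i j * w j

/-- `f_i(v,w) = (1/2) v_i² 1_{i∈I} + Σ_{k ≤ i} A^V_{ik} v_k + g_i(w)`. -/
def fRic {m n : ℕ} (I : Finset (Fin m)) (AV : Matrix (Fin m) (Fin m) ℝ)
    (π : Fin m → Matrix (Fin n) (Fin n) ℝ) (AC : Matrix (Fin m) (Fin n) ℝ)
    (v : Fin m → ℝ) (w : Fin n → ℝ) (i : Fin m) : ℝ :=
  (1 / 2) * (v i) ^ 2 * (if i ∈ I then 1 else 0)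
    + (∑ k ∈ Finset.univ.filter (fun k => k ≤ i), AV i k * v k)
    + gfun π AC w i

/-- `E(w) = {v : f_i(v,w) ≤ 0 ∀ i}`. -/
def Eset {m n : ℕ} (I : Finset (Fin m)) (AV : Matrix (Fin m) (Fin m) ℝ)
    (π : Fin m → Matrix (Fin n) (Fin n) ℝ) (AC : Matrix (Fin m) (Fin n) ℝ)
    (w : Fin n → ℝ) : Set (Fin m → ℝ) :=
  {v | ∀ i, fRic I AV π AC v w i ≤ 0}

/-- `E°(w) = {v : f_i(v,w) < 0 ∀ i}`. -/
def EsetO {m n : ℕ} (I : Finset (Fin m)) (AV : Matrix (Fin m) (Fin m) ℝ)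
    (π : Fin m → Matrix (Fin n) (Fin n) ℝ) (AC : Matrix (Fin m) (Fin n) ℝ)
    (w : Fin n → ℝ) : Set (Fin m → ℝ) :=
  {v | ∀ i, fRic I AV π AC v w i < 0}

/-- `𝔇 = {w ∈ Ker A^D : E(w) ≠ ∅}`. -/
def Dset {m n : ℕ} (I : Finset (Fin m)) (AV : Matrix (Fin m) (Fin m) ℝ)
    (π : Fin m → Matrix (Fin n) (Fin n) ℝ) (AC : Matrix (Fin m) (Fin n) ℝ)
    (AD : Matrix (Fin n) (Fin n) ℝ) : Set (Fin n → ℝ) :=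
  {w | AD.mulVec w = 0 ∧ (Eset I AV π AC w).Nonempty}

/-- `𝔇° = {w ∈ Ker A^D : E°(w) ≠ ∅}`. -/
def DsetO {m n : ℕ} (I : Finset (Fin m)) (AV : Matrix (Fin m) (Fin m) ℝ)
    (π : Fin m → Matrix (Fin n) (Fin n) ℝ) (AC : Matrix (Fin m) (Fin n) ℝ)
    (AD : Matrix (Fin n) (Fin n) ℝ) : Set (Fin n → ℝ) :=
  {w | AD.mulVec w = 0 ∧ (EsetO I AV π AC w).Nonempty}
/-- The vector field of the transformed system (quadODE) on `ℝ^{m+1}`. -/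
def Fq {m n : ℕ} (I : Finset (Fin m)) (AV : Matrix (Fin m) (Fin m) ℝ)
    (π : Fin m → Matrix (Fin n) (Fin n) ℝ) (AC : Matrix (Fin m) (Fin n) ℝ)
    (T : ℝ) (w : Fin n → ℝ) (x : Fin (m + 1) → ℝ) (i : Fin (m + 1)) : ℝ :=
  if h : (i : ℕ) < m then
    (T / 2) * (x i) ^ 2 * (if (⟨i.1, h⟩ : Fin m) ∈ I then 1 else 0) - x i
      + T * (∑ k ∈ Finset.univ.filter (fun k : Fin m => k ≤ (⟨i.1, h⟩ : Fin m)),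
          AV ⟨i.1, h⟩ k * x k.castSucc) * x (Fin.last m)
      + T * (x (Fin.last m)) ^ 2 * gfun π AC w ⟨i.1, h⟩
  else
    -x i

/-- Stable set `W^s_ν(w,T)` of an equilibrium `(ν,0)` of (quadODE): initial conditions `v`
such that the (quadODE) solution starting at `(v,1)` is global and converges to `(ν,0)`. -/
def WsQ {m n : ℕ} (I : Finset (Fin m)) (AV : Matrix (Fin m) (Fin m) ℝ)
    (π : Fin m → Matrix (Fin n) (Fin n) ℝ) (AC : Matrix (Fin m) (Fin n) ℝ)
    (T : ℝ) (w : Fin n → ℝ) (ν : Fin m → ℝ) : Set (Fin m → ℝ) :=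
  {v | ∃ x : ℝ → Fin (m + 1) → ℝ, x 0 = Fin.snoc v 1 ∧
    (∀ s : ℝ, 0 ≤ s → HasDerivAt x (Fq I AV π AC T w (x s)) s) ∧
    Filter.Tendsto x Filter.atTop (nhds (Fin.snoc ν 0))}

/-- `S_T` as a subset of `ℝ^m × Ker A^D`: pairs `(v,w)` whose (Ric-V) solution stays
finite for all `t < T`, i.e. `T*(v,w) ≥ T`. -/
def STP {m n : ℕ} (I : Finset (Fin m)) (AV : Matrix (Fin m) (Fin m) ℝ)
    (π : Fin m → Matrix (Fin n) (Fin n) ℝ) (AC : Matrix (Fin m) (Fin n) ℝ)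
    (AD : Matrix (Fin n) (Fin n) ℝ) (T : ℝ) :
    Set {p : (Fin m → ℝ) × (Fin n → ℝ) // AD.mulVec p.2 = 0} :=
  {p | ∃ y : ℝ → Fin m → ℝ, y 0 = p.val.1 ∧
    ∀ t : ℝ, 0 ≤ t → t < T → HasDerivAt y (fRic I AV π AC (y t) p.val.2) t}

open scoped ENNReal

/-- `y` solves `ẏ = F(y)` on `[0,T)`. -/
def SolOn {d : ℕ} (F : (Fin d → ℝ) → (Fin d → ℝ)) (y : ℝ → Fin d → ℝ) (T : ℝ≥0∞) : Prop :=
  ∀ t : ℝ, 0 ≤ t → ENNReal.ofReal t < T → HasDerivAt y (F (y t)) t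

/-- `y` is a maximal solution of `ẏ = F(y)`, with lifetime `T`: it is a solution on `[0,T)`
and no solution with the same initial value exists on a longer interval. -/
def IsMaxSol {d : ℕ} (F : (Fin d → ℝ) → (Fin d → ℝ)) (y : ℝ → Fin d → ℝ) (T : ℝ≥0∞) : Prop :=
  0 < T ∧ SolOn F y T ∧
    ∀ (z : ℝ → Fin d → ℝ) (T' : ℝ≥0∞), T < T' → SolOn F z T' → z 0 ≠ y 0

/-- Lyapunov stability of an equilibrium point. -/
def StablePt {d : ℕ} (F : (Fin d → ℝ) → (Fin d → ℝ)) (ν : Fin d → ℝ) : Prop :=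
  ∀ ε : ℝ, 0 < ε → ∃ δ : ℝ, 0 < δ ∧ ∀ (y : ℝ → Fin d → ℝ) (T : ℝ≥0∞),
    IsMaxSol F y T → ‖y 0 - ν‖ < δ →
      ∀ t : ℝ, 0 < t → ENNReal.ofReal t < T → ‖y t - ν‖ < ε

/-- Asymptotic stability of an equilibrium point. -/
def AsympStablePt {d : ℕ} (F : (Fin d → ℝ) → (Fin d → ℝ)) (ν : Fin d → ℝ) : Prop :=
  StablePt F ν ∧ ∃ δ : ℝ, 0 < δ ∧ ∀ (y : ℝ → Fin d → ℝ) (T : ℝ≥0∞),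
    IsMaxSol F y T → ‖y 0 - ν‖ < δ → T = ⊤ ∧ Filter.Tendsto y Filter.atTop (nhds ν)


-- ===== auxiliary lemmas =====
section Aux
open Set


/-- If the derivative is positive whenever `u` is in the band `[α,β]`, then `u` can never
cross the band downward: once above `α`, always above `α`. -/
lemma stayAbove {u d : ℝ → ℝ} {s₀ α β : ℝ} (hαβ : α < β)
    (hu : ∀ s, s₀ ≤ s → HasDerivAt u (d s) s)
    (hd : ∀ s, s₀ ≤ s → u s ∈ Set.Icc α β → 0 < d s)
    {s₁ : ℝ} (hs₁ : s₀ ≤ s₁) (h1 : α < u s₁) :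
    ∀ τ, s₁ ≤ τ → α < u τ := by
  intro τ hτ
  by_contra hcon
  push_neg at hcon
  have hcont : ∀ t, s₀ ≤ t → ContinuousAt u t := fun t ht => (hu t ht).continuousAt
  have hcontOn : ∀ a b, s₀ ≤ a → ContinuousOn u (Icc a b) :=
    fun a b ha => fun t ht => (hcont t (le_trans ha ht.1)).continuousWithinAt
  -- the set of times in [s₁, τ] where u ≤ α
  set A : Set ℝ := Icc s₁ τ ∩ u ⁻¹' (Iic α) with hA
  have hAne : A.Nonempty := ⟨τ, ⟨hτ, le_refl τ⟩, hcon⟩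
  have hAclosed : IsClosed A :=
    ContinuousOn.preimage_isClosed_of_isClosed (hcontOn s₁ τ hs₁) isClosed_Icc isClosed_Iic
  have hAbdd : BddBelow A := ⟨s₁, fun t ht => ht.1.1⟩
  set t₂ := sInf A with ht₂def
  have ht₂A : t₂ ∈ A := hAclosed.csInf_mem hAne hAbdd
  have ht₂mem : t₂ ∈ Icc s₁ τ := ht₂A.1
  have ht₂le : u t₂ ≤ α := ht₂A.2
  have hbefore : ∀ t, s₁ ≤ t → t < t₂ → α < u t := by
    intro t ht htlt
    by_contra hc
    push_neg at hc
    have : t ∈ A := ⟨⟨ht, le_trans htlt.le ht₂mem.2⟩, hc⟩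
    exact absurd (csInf_le hAbdd this) (not_le.mpr htlt)
  have hs₁t₂ : s₁ < t₂ := by
    rcases lt_or_eq_of_le ht₂mem.1 with h | h
    · exact h
    · exact absurd ht₂le (not_le.mpr (h ▸ h1))
  have ht₂eq : u t₂ = α := by
    refine le_antisymm ht₂le ?_
    have htend : Tendsto u (𝓝[<] t₂) (𝓝 (u t₂)) :=
      ((hcont t₂ (le_trans hs₁ ht₂mem.1)).continuousWithinAt).tendsto
    have hev : ∀ᶠ t in 𝓝[<] t₂, α ≤ u t := by
      filter_upwards [Ioo_mem_nhdsLT_of_mem (Set.mem_Ioc.mpr ⟨hs₁t₂, le_refl _⟩)] with t ht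
      exact (hbefore t ht.1.le ht.2).le
    exact ge_of_tendsto htend hev
  -- strict monotonicity helper on an interval where u stays in the band
  have hmono : ∀ a b, s₀ ≤ a → a < b → (∀ t ∈ Icc a b, u t ∈ Icc α β) → u a < u b := by
    intro a b ha hab hband
    have : StrictMonoOn u (Icc a b) := by
      apply strictMonoOn_of_deriv_pos (convex_Icc a b) (hcontOn a b ha)
      intro t ht
      rw [interior_Icc] at ht
      have ht' : s₀ ≤ t := le_trans ha ht.1.le
      rw [(hu t ht').deriv]
      exact hd t ht' (hband t ⟨ht.1.le, ht.2.le⟩)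
    exact this ⟨le_refl a, hab.le⟩ ⟨hab.le, le_refl b⟩ hab
  -- set of times in [s₁,t₂] where u ≥ β
  set B : Set ℝ := Icc s₁ t₂ ∩ u ⁻¹' (Ici β) with hB
  rcases B.eq_empty_or_nonempty with hBemp | hBne
  · -- u stays in [α,β] on [s₁,t₂]
    have hband : ∀ t ∈ Icc s₁ t₂, u t ∈ Icc α β := by
      intro t ht
      constructor
      · rcases lt_or_eq_of_le ht.2 with h | h
        · exact (hbefore t ht.1 h).le
        · rw [h, ht₂eq]
      · by_contra hc
        push_neg at hc
        have hmem : t ∈ B := ⟨ht, hc.le⟩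
        rw [hBemp] at hmem
        exact hmem
    have := hmono s₁ t₂ hs₁ hs₁t₂ hband
    rw [ht₂eq] at this
    exact absurd this (not_lt.mpr h1.le)
  · set t₁ := sSup B with ht₁def
    have hBclosed : IsClosed B :=
      ContinuousOn.preimage_isClosed_of_isClosed (hcontOn s₁ t₂ hs₁) isClosed_Icc isClosed_Ici
    have hBbdd : BddAbove B := ⟨t₂, fun t ht => ht.1.2⟩
    have ht₁B : t₁ ∈ B := hBclosed.csSup_mem hBne hBbdd
    have ht₁mem : t₁ ∈ Icc s₁ t₂ := ht₁B.1
    have ht₁ge : β ≤ u t₁ := ht₁B.2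
    have ht₁lt : t₁ < t₂ := by
      rcases lt_or_eq_of_le ht₁mem.2 with h | h
      · exact h
      · exfalso; rw [h, ht₂eq] at ht₁ge; exact absurd ht₁ge (not_le.mpr hαβ)
    have hafter : ∀ t, t₁ < t → t ≤ t₂ → u t < β := by
      intro t ht htle
      by_contra hc
      push_neg at hc
      have : t ∈ B := ⟨⟨le_trans ht₁mem.1 ht.le, htle⟩, hc⟩
      exact absurd (le_csSup hBbdd this) (not_le.mpr ht)
    have ht₁eq : u t₁ = β := by
      refine le_antisymm ?_ ht₁ge
      have htend : Tendsto u (𝓝[>] t₁) (𝓝 (u t₁)) :=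
        ((hcont t₁ (le_trans hs₁ ht₁mem.1)).continuousWithinAt).tendsto
      have hev : ∀ᶠ t in 𝓝[>] t₁, u t ≤ β := by
        filter_upwards [Ioo_mem_nhdsGT_of_mem (Set.mem_Ico.mpr ⟨le_refl _, ht₁lt⟩)] with t ht
        exact (hafter t ht.1 ht.2.le).le
      exact le_of_tendsto htend hev
    have hband : ∀ t ∈ Icc t₁ t₂, u t ∈ Icc α β := by
      intro t ht
      constructor
      · rcases lt_or_eq_of_le ht.2 with h | h
        · exact (hbefore t (le_trans ht₁mem.1 ht.1) h).le
        · rw [h, ht₂eq]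
      · rcases lt_or_eq_of_le ht.1 with h | h
        · exact (hafter t h ht.2).le
        · rw [← h, ht₁eq]
    have := hmono t₁ t₂ (le_trans hs₁ ht₁mem.1) ht₁lt hband
    rw [ht₁eq, ht₂eq] at this
    exact absurd this (not_lt.mpr hαβ.le)

/-- Mirror of `stayAbove`. -/
lemma stayBelow {u d : ℝ → ℝ} {s₀ α β : ℝ} (hαβ : α < β)
    (hu : ∀ s, s₀ ≤ s → HasDerivAt u (d s) s)
    (hd : ∀ s, s₀ ≤ s → u s ∈ Set.Icc α β → d s < 0)
    {s₁ : ℝ} (hs₁ : s₀ ≤ s₁) (h1 : u s₁ < β) :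
    ∀ τ, s₁ ≤ τ → u τ < β := by
  have := stayAbove (u := fun s => -u s) (d := fun s => -d s) (s₀ := s₀)
    (α := -β) (β := -α) (by linarith)
    (fun s hs => (hu s hs).neg)
    (fun s hs hmem => by
      have : u s ∈ Set.Icc α β := ⟨by simpa using neg_le_neg hmem.2, by simpa using neg_le_neg hmem.1⟩
      simpa using hd s hs this)
    hs₁ (by simpa using h1)
  intro τ hτ
  have := this τ hτ
  simpa using this

/-- Linear growth from a lower bound on the derivative. -/
lemma derivGrowth {u d : ℝ → ℝ} {s₁ c : ℝ}
    (hu : ∀ s, s₁ ≤ s → HasDerivAt u (d s) s)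
    (hd : ∀ s, s₁ ≤ s → c ≤ d s) :
    ∀ τ, s₁ ≤ τ → u s₁ + c * (τ - s₁) ≤ u τ := by
  intro τ hτ
  rcases eq_or_lt_of_le hτ with h | h
  · rw [← h]; simp
  set g : ℝ → ℝ := fun s => u s - c * s with hg
  have hgmono : MonotoneOn g (Icc s₁ τ) := by
    apply monotoneOn_of_deriv_nonneg (convex_Icc s₁ τ)
    · exact fun t ht => (((hu t ht.1).sub ((hasDerivAt_id t).const_mul c)).continuousAt).continuousWithinAt
    · intro t ht
      rw [interior_Icc] at ht
      exact (((hu t ht.1.le).sub (by simpa using (hasDerivAt_id t).const_mul c)).differentiableAt).differentiableWithinAt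
    · intro t ht
      rw [interior_Icc] at ht
      have hder : HasDerivAt g (d t - c) t := by
        exact ((hu t ht.1.le).sub ((hasDerivAt_id t).const_mul c)).congr_deriv (by ring)
      rw [hder.deriv]
      linarith [hd t ht.1.le]
  have := hgmono ⟨le_refl s₁, hτ⟩ ⟨hτ, le_refl τ⟩ hτ
  simp only [hg] at this
  linarith

/-- Solutions of `u' = -u` on `[0,∞)`. -/
lemma expSolution {u : ℝ → ℝ} (hu : ∀ s, 0 ≤ s → HasDerivAt u (-u s) s) :
    ∀ s, 0 ≤ s → u s = u 0 * Real.exp (-s) := by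
  intro s hs
  set g : ℝ → ℝ := fun t => u t * Real.exp t with hg
  have hgconst : ∀ t ∈ Icc 0 s, g t = g 0 := by
    apply constant_of_has_deriv_right_zero
    · exact fun t ht => (((hu t ht.1).mul (Real.hasDerivAt_exp t)).continuousAt).continuousWithinAt
    · intro t ht
      have : HasDerivAt g 0 t := by
        have := (hu t ht.1).mul (Real.hasDerivAt_exp t)
        exact this.congr_deriv (by ring)
      exact this.hasDerivWithinAt
  have := hgconst s ⟨hs, le_refl s⟩
  simp only [hg, Real.exp_zero, mul_one] at this
  have hexp : Real.exp s ≠ 0 := (Real.exp_pos s).ne'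
  rw [Real.exp_neg, ← this, mul_inv_cancel_right₀ hexp]

/-- Convergence of bounded solutions of an asymptotically autonomous scalar Riccati-type ODE. -/
lemma scalarConv {u εf : ℝ → ℝ} {a K C : ℝ} (ha : 0 ≤ a)
    (hu : ∀ s, 0 ≤ s → HasDerivAt u (a * (u s)^2 - u s + εf s) s)
    (hε : ∀ s, 0 ≤ s → |εf s| ≤ K * Real.exp (-s))
    (hC : ∀ s, 0 ≤ s → |u s| ≤ C) :
    ∃ r, a * r^2 - r = 0 ∧ Filter.Tendsto u Filter.atTop (nhds r) := by
  obtain ⟨d, hd⟩ : ∃ d : ℝ → ℝ, d = fun s => a * (u s)^2 - u s + εf s := ⟨_, rfl⟩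
  obtain ⟨φ, hφ⟩ : ∃ φ : ℝ → ℝ, φ = fun v => a * v^2 - v := ⟨_, rfl⟩
  have hφu : ∀ s, d s = φ (u s) + εf s := fun s => by simp [hd, hφ]
  have hφcont : Continuous φ := by rw [hφ]; fun_prop
  have hKdecay : Filter.Tendsto (fun s : ℝ => K * Real.exp (-s)) Filter.atTop (nhds 0) := by
    simpa using Real.tendsto_exp_neg_atTop_nhds_zero.const_mul K
  have hble : Filter.IsBoundedUnder (· ≤ ·) Filter.atTop u := by
    apply Filter.isBoundedUnder_of_eventually_le (a := C)
    filter_upwards [Filter.eventually_ge_atTop (0:ℝ)] with s hs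
    exact (abs_le.mp (hC s hs)).2
  have hbge : Filter.IsBoundedUnder (· ≥ ·) Filter.atTop u := by
    apply Filter.isBoundedUnder_of_eventually_ge (a := -C)
    filter_upwards [Filter.eventually_ge_atTop (0:ℝ)] with s hs
    exact (abs_le.mp (hC s hs)).1
  obtain ⟨l, hldef⟩ : ∃ l, l = Filter.liminf u Filter.atTop := ⟨_, rfl⟩
  obtain ⟨L, hLdef⟩ : ∃ L, L = Filter.limsup u Filter.atTop := ⟨_, rfl⟩
  have hlL : l ≤ L := by rw [hldef, hLdef]; exact Filter.liminf_le_limsup hble hbge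
  have hmain : l = L := by
    by_contra hne
    have hlt : l < L := lt_of_le_of_ne hlL hne
    have hc : ∃ c, l < c ∧ c < L ∧ φ c ≠ 0 := by
      by_contra hcon
      push_neg at hcon
      have hroot : ∀ v, φ v = 0 → v = 0 ∨ a * v = 1 := by
        intro v hv
        have h2 : v * (a * v - 1) = 0 := by
          simp only [hφ] at hv; ring_nf; ring_nf at hv; linarith
        rcases mul_eq_zero.mp h2 with h | h
        · exact Or.inl h
        · exact Or.inr (by linarith)
      have haux : ∀ v w : ℝ, v < w → a * v = 1 → a * w = 1 → False := by
        intro v w hvw h1 h2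
        have hapos : 0 < a := by
          rcases lt_or_eq_of_le ha with h | h
          · exact h
          · exfalso; rw [← h] at h1; simp at h1
        nlinarith [mul_lt_mul_of_pos_left hvw hapos]
      have haux0 : ∀ v w : ℝ, v < w → v = 0 → w = 0 → False := by
        intro v w hvw h1 h2; rw [h1, h2] at hvw; exact lt_irrefl 0 hvw
      set c1 := l + (L - l)/4 with hc1
      set c2 := l + (L - l)/2 with hc2
      set c3 := l + 3*(L - l)/4 with hc3
      have h12 : c1 < c2 := by rw [hc1, hc2]; linarith
      have h13 : c1 < c3 := by rw [hc1, hc3]; linarith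
      have h23 : c2 < c3 := by rw [hc2, hc3]; linarith
      have r1 := hroot c1 (hcon c1 (by rw [hc1]; linarith) (by rw [hc1]; linarith))
      have r2 := hroot c2 (hcon c2 (by rw [hc2]; linarith) (by rw [hc2]; linarith))
      have r3 := hroot c3 (hcon c3 (by rw [hc3]; linarith) (by rw [hc3]; linarith))
      rcases r1 with r1 | r1 <;> rcases r2 with r2 | r2 <;> rcases r3 with r3 | r3 <;>
        first
          | exact haux0 c1 c2 h12 r1 r2
          | exact haux0 c1 c3 h13 r1 r3
          | exact haux0 c2 c3 h23 r2 r3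
          | exact haux c1 c2 h12 r1 r2
          | exact haux c1 c3 h13 r1 r3
          | exact haux c2 c3 h23 r2 r3
    obtain ⟨c, hcl, hcL, hcroot⟩ := hc
    rcases hcroot.lt_or_gt with hneg | hpos
    · -- φ c < 0 : use stayBelow to contradict limsup
      obtain ⟨δ₀, hδ₀pos, hδ₀⟩ := Metric.continuousAt_iff.mp hφcont.continuousAt (-(φ c) / 2)
        (by linarith)
      set δ := min (δ₀/2) (min ((c - l)/2) ((L - c)/2)) with hδ
      have hδpos : 0 < δ := by
        apply lt_min (by linarith) (lt_min (by linarith) (by linarith))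
      have hδa : δ ≤ δ₀/2 := min_le_left _ _
      have hδb : δ ≤ (c - l)/2 := le_trans (min_le_right _ _) (min_le_left _ _)
      have hδc : δ ≤ (L - c)/2 := le_trans (min_le_right _ _) (min_le_right _ _)
      have hband : ∀ v, v ∈ Set.Icc (c - δ) (c + δ) → φ v < φ c / 2 := by
        intro v hv
        have hdist : dist v c < δ₀ := by
          rw [Real.dist_eq, abs_lt]
          cases' hv with hv1 hv2
          constructor <;> linarith
        have := hδ₀ hdist
        rw [Real.dist_eq, abs_lt] at this
        cases' this with this1 this2
        linarith
      have hev1 : ∀ᶠ s in Filter.atTop, K * Real.exp (-s) < -(φ c)/2 :=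
        hKdecay.eventually_lt_const (by linarith)
      obtain ⟨s₀, hs₀⟩ := Filter.eventually_atTop.mp (hev1.and (Filter.eventually_ge_atTop (0:ℝ)))
      have hfreq : ∃ᶠ s in Filter.atTop, u s < c - δ :=
        Filter.frequently_lt_of_liminf_lt hble.isCoboundedUnder_ge (by rw [← hldef]; linarith)
      obtain ⟨s₁, hs₁prop, hs₁ge⟩ :=
        (hfreq.and_eventually (Filter.eventually_ge_atTop s₀)).exists
      have hdneg : ∀ s, s₀ ≤ s → u s ∈ Set.Icc (c - δ) (c + δ) → d s < 0 := by
        intro s hs hmem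
        have h1 := (hs₀ s hs).1
        have h2 : φ (u s) < φ c / 2 := hband (u s) hmem
        have h3 : εf s ≤ K * Real.exp (-s) := le_trans (le_abs_self _) (hε s (hs₀ s hs).2)
        rw [hφu]; linarith
      have hstay := stayBelow (α := c - δ) (β := c + δ) (s₀ := s₀) (d := d) (u := u)
        (by linarith) (fun s hs => by rw [hφu]; simpa [hφ] using hu s (hs₀ s hs).2)
        hdneg hs₁ge (by linarith)
      have : L ≤ c + δ := by
        rw [hLdef]
        apply Filter.limsup_le_of_le hbge.isCoboundedUnder_le
        exact Filter.eventually_atTop.mpr ⟨s₁, fun τ hτ => (hstay τ hτ).le⟩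
      linarith
    · -- 0 < φ c : use stayAbove to contradict liminf
      obtain ⟨δ₀, hδ₀pos, hδ₀⟩ := Metric.continuousAt_iff.mp hφcont.continuousAt (φ c / 2)
        (by linarith)
      set δ := min (δ₀/2) (min ((c - l)/2) ((L - c)/2)) with hδ
      have hδpos : 0 < δ := by
        apply lt_min (by linarith) (lt_min (by linarith) (by linarith))
      have hδa : δ ≤ δ₀/2 := min_le_left _ _
      have hδb : δ ≤ (c - l)/2 := le_trans (min_le_right _ _) (min_le_left _ _)
      have hδc : δ ≤ (L - c)/2 := le_trans (min_le_right _ _) (min_le_right _ _)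
      have hband : ∀ v, v ∈ Set.Icc (c - δ) (c + δ) → φ c / 2 < φ v := by
        intro v hv
        have hdist : dist v c < δ₀ := by
          rw [Real.dist_eq, abs_lt]
          cases' hv with hv1 hv2
          constructor <;> linarith
        have := hδ₀ hdist
        rw [Real.dist_eq, abs_lt] at this
        cases' this with this1 this2
        linarith
      have hev1 : ∀ᶠ s in Filter.atTop, K * Real.exp (-s) < φ c / 2 :=
        hKdecay.eventually_lt_const (by linarith)
      obtain ⟨s₀, hs₀⟩ := Filter.eventually_atTop.mp (hev1.and (Filter.eventually_ge_atTop (0:ℝ)))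
      have hfreq : ∃ᶠ s in Filter.atTop, c + δ < u s :=
        Filter.frequently_lt_of_lt_limsup hbge.isCoboundedUnder_le (by rw [← hLdef]; linarith)
      obtain ⟨s₁, hs₁prop, hs₁ge⟩ :=
        (hfreq.and_eventually (Filter.eventually_ge_atTop s₀)).exists
      have hdpos : ∀ s, s₀ ≤ s → u s ∈ Set.Icc (c - δ) (c + δ) → 0 < d s := by
        intro s hs hmem
        have h1 := (hs₀ s hs).1
        have h2 : φ c / 2 < φ (u s) := hband (u s) hmem
        have h3 : -(K * Real.exp (-s)) ≤ εf s := neg_le_of_abs_le (hε s (hs₀ s hs).2)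
        rw [hφu]; linarith
      have hstay := stayAbove (α := c - δ) (β := c + δ) (s₀ := s₀) (d := d) (u := u)
        (by linarith) (fun s hs => by rw [hφu]; simpa [hφ] using hu s (hs₀ s hs).2)
        hdpos hs₁ge (by linarith)
      have : c - δ ≤ l := by
        rw [hldef]
        apply Filter.le_liminf_of_le hble.isCoboundedUnder_ge
        exact Filter.eventually_atTop.mpr ⟨s₁, fun τ hτ => (hstay τ hτ).le⟩
      linarith
  have htend : Filter.Tendsto u Filter.atTop (nhds l) :=
    tendsto_of_liminf_eq_limsup hldef.symm (by rw [hmain]; exact hLdef.symm) hble hbge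
  refine ⟨l, ?_, htend⟩
  -- the limit is a root of φ
  by_contra hr
  have hr' : φ l ≠ 0 := by simpa [hφ] using hr
  rcases hr'.lt_or_gt with hneg | hpos
  · -- φ l < 0 : u decreases linearly, contradiction
    obtain ⟨δ₀, hδ₀pos, hδ₀⟩ := Metric.continuousAt_iff.mp hφcont.continuousAt (-(φ l) / 2)
      (by linarith)
    set δ := δ₀/2 with hδ
    have hδpos : 0 < δ := by linarith
    have hband : ∀ v, v ∈ Set.Icc (l - δ) (l + δ) → φ v < φ l / 2 := by
      intro v hv
      have hdist : dist v l < δ₀ := by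
        rw [Real.dist_eq, abs_lt]
        cases' hv with hv1 hv2
        constructor <;> linarith
      have := hδ₀ hdist
      rw [Real.dist_eq, abs_lt] at this
      cases' this with this1 this2
      linarith
    have hev1 : ∀ᶠ s in Filter.atTop, K * Real.exp (-s) < -(φ l) / 4 :=
      hKdecay.eventually_lt_const (by linarith)
    have hev2 : ∀ᶠ s in Filter.atTop, u s ∈ Set.Ioo (l - δ) (l + δ) :=
      htend (Ioo_mem_nhds (by linarith) (by linarith))
    obtain ⟨s₁, hs₁⟩ := Filter.eventually_atTop.mp
      ((hev1.and hev2).and (Filter.eventually_ge_atTop (0:ℝ)))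
    have hdle : ∀ s, s₁ ≤ s → d s ≤ φ l / 4 := by
      intro s hs
      obtain ⟨⟨h1, h2⟩, h3⟩ := hs₁ s hs
      have h4 : φ (u s) < φ l / 2 := hband (u s) ⟨h2.1.le, h2.2.le⟩
      have h5 : εf s ≤ K * Real.exp (-s) := le_trans (le_abs_self _) (hε s h3)
      rw [hφu]; linarith
    have hgrow := derivGrowth (u := fun s => -u s) (d := fun s => -d s) (s₁ := s₁)
      (c := -(φ l)/4)
      (fun s hs => by
        have h3 := (hs₁ s hs).2
        exact ((by rw [hφu]; simpa [hφ] using hu s h3 : HasDerivAt u (d s) s)).neg)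
      (fun s hs => by have := hdle s hs; linarith)
    set τ := s₁ + 12*δ/(-(φ l)) with hτ
    have hτge : s₁ ≤ τ := by
      rw [hτ]
      have : 0 < 12*δ/(-(φ l)) := div_pos (by linarith) (by linarith)
      linarith
    have := hgrow τ hτge
    have hcalc : -(φ l)/4 * (τ - s₁) = 3*δ := by
      rw [hτ]; field_simp; ring
    obtain ⟨⟨_, hu1⟩, _⟩ := hs₁ s₁ (le_refl s₁)
    obtain ⟨⟨_, hu2⟩, _⟩ := hs₁ τ hτge
    rw [hcalc] at this
    cases' hu1 with hu1a hu1b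
    cases' hu2 with hu2a hu2b
    linarith
  · -- 0 < φ l : u increases linearly, contradiction
    obtain ⟨δ₀, hδ₀pos, hδ₀⟩ := Metric.continuousAt_iff.mp hφcont.continuousAt (φ l / 2)
      (by linarith)
    set δ := δ₀/2 with hδ
    have hδpos : 0 < δ := by linarith
    have hband : ∀ v, v ∈ Set.Icc (l - δ) (l + δ) → φ l / 2 < φ v := by
      intro v hv
      have hdist : dist v l < δ₀ := by
        rw [Real.dist_eq, abs_lt]
        cases' hv with hv1 hv2
        constructor <;> linarith
      have := hδ₀ hdist
      rw [Real.dist_eq, abs_lt] at this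
      cases' this with this1 this2
      linarith
    have hev1 : ∀ᶠ s in Filter.atTop, K * Real.exp (-s) < φ l / 4 :=
      hKdecay.eventually_lt_const (by linarith)
    have hev2 : ∀ᶠ s in Filter.atTop, u s ∈ Set.Ioo (l - δ) (l + δ) :=
      htend (Ioo_mem_nhds (by linarith) (by linarith))
    obtain ⟨s₁, hs₁⟩ := Filter.eventually_atTop.mp
      ((hev1.and hev2).and (Filter.eventually_ge_atTop (0:ℝ)))
    have hdge : ∀ s, s₁ ≤ s → φ l / 4 ≤ d s := by
      intro s hs
      obtain ⟨⟨h1, h2⟩, h3⟩ := hs₁ s hs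
      have h4 : φ l / 2 < φ (u s) := hband (u s) ⟨h2.1.le, h2.2.le⟩
      have h5 : -(K * Real.exp (-s)) ≤ εf s := neg_le_of_abs_le (hε s h3)
      rw [hφu]; linarith
    have hgrow := derivGrowth (u := u) (d := d) (s₁ := s₁) (c := φ l/4)
      (fun s hs => by rw [hφu]; simpa [hφ] using hu s (hs₁ s hs).2)
      hdge
    set τ := s₁ + 12*δ/(φ l) with hτ
    have hτge : s₁ ≤ τ := by
      rw [hτ]
      have : 0 < 12*δ/(φ l) := div_pos (by linarith) (by linarith)
      linarith
    have := hgrow τ hτge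
    have hcalc : φ l/4 * (τ - s₁) = 3*δ := by
      rw [hτ]; field_simp; ring
    obtain ⟨⟨_, hu1⟩, _⟩ := hs₁ s₁ (le_refl s₁)
    obtain ⟨⟨_, hu2⟩, _⟩ := hs₁ τ hτge
    rw [hcalc] at this
    cases' hu1 with hu1a hu1b
    cases' hu2 with hu2a hu2b
    linarith

end Aux

-- ===== Fq infrastructure =====
section FqAux
open Set Metric

lemma hasDerivAt_proj {d : ℕ} {x : ℝ → Fin d → ℝ} {V : Fin d → ℝ} {s : ℝ}
    (h : HasDerivAt x V s) (i : Fin d) : HasDerivAt (fun t => x t i) (V i) s := by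
  have := (ContinuousLinearMap.proj (R := ℝ) (φ := fun _ : Fin d => ℝ) i).hasFDerivAt.comp_hasDerivAt s h
  exact this

variable {m n : ℕ} (I : Finset (Fin m)) (AV : Matrix (Fin m) (Fin m) ℝ)
    (π : Fin m → Matrix (Fin n) (Fin n) ℝ) (AC : Matrix (Fin m) (Fin n) ℝ)
    (T : ℝ) (w : Fin n → ℝ)

lemma Fq_castSucc (x : Fin (m + 1) → ℝ) (i : Fin m) :
    Fq I AV π AC T w x i.castSucc =
      (T / 2) * (x i.castSucc) ^ 2 * (if i ∈ I then 1 else 0) - x i.castSucc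
        + T * (∑ k ∈ Finset.univ.filter (fun k : Fin m => k ≤ i), AV i k * x k.castSucc)
            * x (Fin.last m)
        + T * (x (Fin.last m)) ^ 2 * gfun π AC w i := by
  have h : ((i.castSucc : Fin (m + 1)) : ℕ) < m := i.isLt
  rw [Fq, dif_pos h]
  have : (⟨(i.castSucc : Fin (m+1)).1, h⟩ : Fin m) = i := by
    apply Fin.ext; simp
  rw [this]

lemma Fq_last (x : Fin (m + 1) → ℝ) :
    Fq I AV π AC T w x (Fin.last m) = - x (Fin.last m) := by
  rw [Fq, dif_neg]
  simp

lemma Fq_contDiff : ContDiff ℝ 1 (fun x => Fq I AV π AC T w x) := by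
  rw [contDiff_pi]
  intro i
  by_cases h : (i : ℕ) < m
  · simp only [Fq, dif_pos h]
    have hproj : ∀ j : Fin (m + 1), ContDiff ℝ 1 (fun x : Fin (m + 1) → ℝ => x j) :=
      fun j => (ContinuousLinearMap.proj (R := ℝ) (φ := fun _ : Fin (m+1) => ℝ) j).contDiff
    apply ContDiff.add
    apply ContDiff.add
    · apply ContDiff.sub
      · exact (contDiff_const.mul ((hproj _).pow 2)).mul contDiff_const
      · exact hproj _
    · apply ContDiff.mul
      · apply ContDiff.mul contDiff_const
        apply ContDiff.sum
        intro k _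
        exact contDiff_const.mul (hproj _)
      · exact hproj _
    · exact (contDiff_const.mul ((hproj _).pow 2)).mul contDiff_const
  · simp only [Fq, dif_neg h]
    exact ((ContinuousLinearMap.proj (R := ℝ) (φ := fun _ : Fin (m+1) => ℝ) i).contDiff).neg

lemma lipOnBall {d : ℕ} {F : (Fin d → ℝ) → (Fin d → ℝ)} (hF : ContDiff ℝ 1 F) (r : ℝ) :
    ∃ K : NNReal, LipschitzOnWith K F (Metric.closedBall 0 r) := by
  have hcompact : IsCompact (Metric.closedBall (0 : Fin d → ℝ) r) := isCompact_closedBall _ _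
  obtain ⟨B, hB⟩ := hcompact.exists_bound_of_continuousOn
    ((hF.continuous_fderiv one_ne_zero).continuousOn)
  refine ⟨⟨max B 0, le_max_right _ _⟩, ?_⟩
  apply Convex.lipschitzOnWith_of_nnnorm_fderiv_le
    (fun x _ => (hF.differentiable one_ne_zero) x) ?_ (convex_closedBall _ _)
  intro x hx
  have h1 : ‖fderiv ℝ F x‖ ≤ max B 0 := le_trans (hB x hx) (le_max_left _ _)
  exact_mod_cast h1

lemma boundOnBall {d : ℕ} {F : (Fin d → ℝ) → (Fin d → ℝ)} (hF : Continuous F) (r : ℝ) :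
    ∃ C, ∀ x ∈ Metric.closedBall (0 : Fin d → ℝ) r, ‖F x‖ ≤ C :=
  (isCompact_closedBall _ _).exists_bound_of_continuousOn hF.continuousOn

end FqAux

-- ===== extension / blow-up lemma =====
section Ext
open Set Metric ENNReal

lemma maxsol_finite_blowup {d : ℕ} {F : (Fin d → ℝ) → (Fin d → ℝ)} (hF : ContDiff ℝ 1 F)
    {x : ℝ → Fin d → ℝ} {Sstar : ℝ} (hS : 0 < Sstar)
    (hsol : ∀ t : ℝ, 0 ≤ t → t < Sstar → HasDerivAt x (F (x t)) t)
    (hmax : ∀ (z : ℝ → Fin d → ℝ) (T' : ℝ≥0∞), ENNReal.ofReal Sstar < T' →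
      SolOn F z T' → z 0 ≠ x 0)
    {R : ℝ} (hacc : ∀ η, 0 < η → ∃ s, 0 ≤ s ∧ Sstar - η < s ∧ s < Sstar ∧ ‖x s‖ ≤ R) :
    False := by
  obtain ⟨L, hL⟩ := lipOnBall hF (R + 1)
  obtain ⟨C0, hC0⟩ := boundOnBall hF.continuous (R + 1)
  obtain ⟨C1, hC1def⟩ : ∃ C1, C1 = max C0 1 := ⟨_, rfl⟩
  have hC1pos : 0 < C1 := by rw [hC1def]; exact lt_of_lt_of_le one_pos (le_max_right _ _)
  have hC1' : ∀ y ∈ Metric.closedBall (0 : Fin d → ℝ) (R + 1), ‖F y‖ ≤ C1 := by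
    intro y hy; rw [hC1def]; exact le_trans (hC0 y hy) (le_max_left _ _)
  obtain ⟨δ, hδdef⟩ : ∃ δ : ℝ, δ = 1 / C1 := ⟨_, rfl⟩
  have hδpos : 0 < δ := by rw [hδdef]; positivity
  obtain ⟨s₀, hs₀0, hs₀lt1, hs₀lt2, hs₀R⟩ := hacc (min (δ/2) Sstar) (lt_min (by linarith) hS)
  have h1 : Sstar < s₀ + δ/2 := by
    have : min (δ/2) Sstar ≤ δ/2 := min_le_left _ _
    linarith
  have hsub : Metric.closedBall (x s₀) 1 ⊆ Metric.closedBall (0 : Fin d → ℝ) (R + 1) := by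
    intro y hy
    rw [mem_closedBall_iff_norm] at hy
    rw [mem_closedBall_zero_iff]
    calc ‖y‖ = ‖(y - x s₀) + x s₀‖ := by rw [sub_add_cancel]
    _ ≤ ‖y - x s₀‖ + ‖x s₀‖ := norm_add_le _ _
    _ ≤ R + 1 := by linarith
  have hpl : IsPicardLindelof (fun _ => F) (tmin := s₀ - δ) (tmax := s₀ + δ)
      ⟨s₀, ⟨by linarith, by linarith⟩⟩ (x s₀) 1 0 ⟨C1, hC1pos.le⟩ L :=
    { lipschitzOnWith := fun t _ => hL.mono (by simpa using hsub)
      continuousOn := fun _ _ => continuousOn_const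
      norm_le := fun t _ y hy => hC1' y (hsub (by simpa using hy))
      mul_max_le := by
        show C1 * max (s₀ + δ - s₀) (s₀ - (s₀ - δ)) ≤ (1:ℝ) - 0
        have h2 : s₀ + δ - s₀ = δ := by ring
        have h3 : s₀ - (s₀ - δ) = δ := by ring
        rw [h2, h3, max_self, hδdef, mul_one_div, div_self (ne_of_gt hC1pos), sub_zero] }
  obtain ⟨f, hf0, hfderiv⟩ := hpl.exists_eq_forall_mem_Icc_hasDerivWithinAt₀
  -- uniqueness of solutions: x and f agree on [s₀, Sstar)
  have hIccsub : ∀ t, t < Sstar → Icc s₀ t ⊆ Icc (s₀ - δ) (s₀ + δ) := by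
    intro t ht u hu
    exact ⟨by linarith [hu.1], by linarith [hu.2]⟩
  have hunique : ∀ t, s₀ ≤ t → t < Sstar → x t = f t := by
    intro t ht htlt
    have hxcont : ContinuousOn x (Icc s₀ t) := fun u hu =>
      ((hsol u (le_trans hs₀0 hu.1) (lt_of_le_of_lt hu.2 htlt)).continuousAt).continuousWithinAt
    have hfcont : ContinuousOn f (Icc s₀ t) := fun u hu =>
      ((hfderiv u ((hIccsub t htlt) hu)).continuousWithinAt).mono (hIccsub t htlt)
    obtain ⟨Bx, hBx⟩ := (isCompact_Icc).exists_bound_of_continuousOn hxcont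
    obtain ⟨Bf, hBf⟩ := (isCompact_Icc).exists_bound_of_continuousOn hfcont
    obtain ⟨ρ, hρdef⟩ : ∃ ρ : ℝ, ρ = max (max Bx Bf) 0 := ⟨_, rfl⟩
    obtain ⟨K, hK⟩ := lipOnBall hF ρ
    have hmemx : ∀ u ∈ Ico s₀ t, x u ∈ Metric.closedBall (0 : Fin d → ℝ) ρ := by
      intro u hu
      rw [mem_closedBall_zero_iff, hρdef]
      exact le_trans (hBx u ⟨hu.1, hu.2.le⟩) (le_trans (le_max_left _ _) (le_max_left _ _))
    have hmemf : ∀ u ∈ Ico s₀ t, f u ∈ Metric.closedBall (0 : Fin d → ℝ) ρ := by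
      intro u hu
      rw [mem_closedBall_zero_iff, hρdef]
      exact le_trans (hBf u ⟨hu.1, hu.2.le⟩) (le_trans (le_max_right _ _) (le_max_left _ _))
    have hder_x : ∀ u ∈ Ico s₀ t, HasDerivWithinAt x (F (x u)) (Ici u) u := by
      intro u hu
      exact (hsol u (le_trans hs₀0 hu.1) (lt_of_lt_of_le hu.2 htlt.le)).hasDerivWithinAt
    have hder_f : ∀ u ∈ Ico s₀ t, HasDerivWithinAt f (F (f u)) (Ici u) u := by
      intro u hu
      have hmem : Icc (s₀ - δ) (s₀ + δ) ∈ nhdsWithin u (Ici u) := by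
        apply Filter.mem_of_superset
          (Filter.inter_mem self_mem_nhdsWithin
            (mem_nhdsWithin_of_mem_nhds (Ioo_mem_nhds
              (show s₀ - δ < u by linarith [hu.1])
              (show u < s₀ + δ by linarith [hu.2, htlt]))))
        rintro v ⟨hv1, hv2⟩
        exact ⟨hv2.1.le, hv2.2.le⟩
      exact (hfderiv u ((hIccsub t htlt) ⟨hu.1, hu.2.le⟩)).mono_of_mem_nhdsWithin hmem
    have := ODE_solution_unique_of_mem_Icc_right
      (v := fun _ : ℝ => F) (s := fun _ : ℝ => Metric.closedBall (0 : Fin d → ℝ) ρ) (K := K)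
      (fun _ _ => hK) hxcont hder_x hmemx hfcont hder_f hmemf hf0.symm
    exact this ⟨ht, le_refl t⟩
  -- glue x and f into a solution on a longer interval
  obtain ⟨z, hzdef⟩ : ∃ z : ℝ → Fin d → ℝ, z = fun t => if t < Sstar then x t else f t := ⟨_, rfl⟩
  have hz0 : z 0 = x 0 := by rw [hzdef]; simp only; rw [if_pos hS]
  refine hmax z (ENNReal.ofReal (s₀ + δ)) ?_ ?_ hz0
  · rw [ENNReal.ofReal_lt_ofReal_iff (by linarith)]
    linarith
  · intro t ht hlt
    rw [ENNReal.ofReal_lt_ofReal_iff (by linarith)] at hlt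
    by_cases hcase : t < Sstar
    · have hev : z =ᶠ[nhds t] x := by
        filter_upwards [Iio_mem_nhds hcase] with v hv
        rw [hzdef]; simp only; rw [if_pos (Set.mem_Iio.mp hv)]
      have hx := hsol t ht hcase
      have hzt : z t = x t := by rw [hzdef]; simp only; rw [if_pos hcase]
      rw [hzt]
      exact hx.congr_of_eventuallyEq hev
    · push_neg at hcase
      have htlo : s₀ < t := lt_of_lt_of_le hs₀lt2 hcase
      have hev : z =ᶠ[nhds t] f := by
        filter_upwards [Ioo_mem_nhds htlo hlt] with v hv
        by_cases hv2 : v < Sstar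
        · have hxvf : x v = f v := hunique v hv.1.le hv2
          rw [hzdef]; simp only; rw [if_pos hv2, hxvf]
        · rw [hzdef]; simp only; rw [if_neg hv2]
      have hf := (hfderiv t ⟨by linarith, hlt.le⟩).hasDerivAt
        (Icc_mem_nhds (by linarith) hlt)
      have hzt : z t = f t := by rw [hzdef]; simp only; rw [if_neg (not_lt.mpr hcase)]
      rw [hzt]
      exact hf.congr_of_eventuallyEq hev

end Ext

-- ===== global solutions are bounded =====
section Global
open Set Metric

lemma filter_le_eq_insert {m : ℕ} (i : Fin m) :
    Finset.univ.filter (fun k => k ≤ i) = insert i (Finset.univ.filter (fun k => k < i)) := by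
  ext k
  simp [le_iff_lt_or_eq, or_comm]

lemma global_coord_bound {m n : ℕ} {I : Finset (Fin m)} {AV : Matrix (Fin m) (Fin m) ℝ}
    {π : Fin m → Matrix (Fin n) (Fin n) ℝ} {AC : Matrix (Fin m) (Fin n) ℝ}
    {T : ℝ} {w : Fin n → ℝ} (hT : 0 < T) {x : ℝ → Fin (m + 1) → ℝ}
    (hsol : ∀ s : ℝ, 0 ≤ s → HasDerivAt x (Fq I AV π AC T w (x s)) s)
    {D : ℝ} (hD : 0 ≤ D)
    (hlast : ∀ s, 0 ≤ s → |x s (Fin.last m)| ≤ D * Real.exp (-s))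
    {N : ℕ} (hNm : N < m) {C : ℝ} (hC0 : 0 ≤ C)
    (hC : ∀ s, 0 ≤ s → ∀ k : Fin m, (k : ℕ) < N → |x s k.castSucc| ≤ C) :
    ∃ Ci, 0 ≤ Ci ∧ ∀ s, 0 ≤ s → |x s (Fin.castSucc ⟨N, hNm⟩)| ≤ Ci := by
  obtain ⟨i, hidef⟩ : ∃ i : Fin m, i = ⟨N, hNm⟩ := ⟨_, rfl⟩
  obtain ⟨u, hu_def⟩ : ∃ u : ℝ → ℝ, u = fun s => x s i.castSucc := ⟨_, rfl⟩
  obtain ⟨χ, hχ⟩ : ∃ χ : ℝ, χ = if i ∈ I then (1:ℝ) else 0 := ⟨_, rfl⟩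
  have hχnn : 0 ≤ χ := by rw [hχ]; split <;> norm_num
  obtain ⟨gi, hgi⟩ : ∃ gi : ℝ, gi = gfun π AC w i := ⟨_, rfl⟩
  obtain ⟨dd, hdd⟩ : ∃ dd : ℝ → ℝ, dd = fun s =>
      (T / 2) * (u s) ^ 2 * χ - u s
        + T * (∑ k ∈ Finset.univ.filter (fun k : Fin m => k ≤ i), AV i k * x s k.castSucc)
            * x s (Fin.last m)
        + T * (x s (Fin.last m)) ^ 2 * gi := ⟨_, rfl⟩
  have hud : ∀ s, 0 ≤ s → HasDerivAt u (dd s) s := by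
    intro s hs
    have h := hasDerivAt_proj (hsol s hs) i.castSucc
    rw [Fq_castSucc] at h
    rw [hdd, hu_def, hχ, hgi]
    simpa using h
  obtain ⟨β, hβ⟩ : ∃ β : ℝ → ℝ, β = fun s => T * AV i i * x s (Fin.last m) := ⟨_, rfl⟩
  obtain ⟨ε1, hε1⟩ : ∃ ε1 : ℝ → ℝ, ε1 = fun s =>
      T * (∑ k ∈ Finset.univ.filter (fun k : Fin m => k < i), AV i k * x s k.castSucc)
          * x s (Fin.last m)
        + T * (x s (Fin.last m)) ^ 2 * gi := ⟨_, rfl⟩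
  have hddeq : ∀ s, dd s = (T/2) * χ * (u s)^2 - u s + β s * u s + ε1 s := by
    intro s
    have hsplit : (∑ k ∈ Finset.univ.filter (fun k : Fin m => k ≤ i), AV i k * x s k.castSucc)
        = (∑ k ∈ Finset.univ.filter (fun k : Fin m => k < i), AV i k * x s k.castSucc)
          + AV i i * u s := by
      rw [filter_le_eq_insert i, Finset.sum_insert (by simp), hu_def]
      ring
    rw [hdd, hβ, hε1]
    simp only
    rw [hsplit]
    ring
  obtain ⟨A1, hA1def⟩ : ∃ A1 : ℝ, A1 = ∑ k ∈ Finset.univ.filter (fun k : Fin m => k < i),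
      |AV i k| := ⟨_, rfl⟩
  have hA1nn : 0 ≤ A1 := by
    rw [hA1def]; exact Finset.sum_nonneg (fun _ _ => abs_nonneg _)
  have hA1 : ∀ s, 0 ≤ s →
      |∑ k ∈ Finset.univ.filter (fun k : Fin m => k < i), AV i k * x s k.castSucc| ≤ A1 * C := by
    intro s hs
    calc |∑ k ∈ Finset.univ.filter (fun k : Fin m => k < i), AV i k * x s k.castSucc|
        ≤ ∑ k ∈ Finset.univ.filter (fun k : Fin m => k < i), |AV i k * x s k.castSucc| :=
          Finset.abs_sum_le_sum_abs _ _
      _ ≤ ∑ k ∈ Finset.univ.filter (fun k : Fin m => k < i), |AV i k| * C := by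
          apply Finset.sum_le_sum
          intro k hk
          rw [abs_mul]
          apply mul_le_mul_of_nonneg_left _ (abs_nonneg _)
          apply hC s hs
          have hki : k < i := (Finset.mem_filter.mp hk).2
          rw [hidef] at hki
          exact hki
      _ = A1 * C := by rw [hA1def, Finset.sum_mul]
  have hβb : ∀ s, 0 ≤ s → |β s| ≤ (|T * AV i i| * D) * Real.exp (-s) := by
    intro s hs
    rw [hβ]
    simp only
    rw [abs_mul, mul_assoc]
    exact mul_le_mul_of_nonneg_left (hlast s hs) (abs_nonneg _)
  obtain ⟨Ke, hKedef⟩ : ∃ Ke : ℝ, Ke = T * (A1 * C) * D + T * D^2 * |gi| := ⟨_, rfl⟩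
  have hε1b : ∀ s, 0 ≤ s → |ε1 s| ≤ Ke * Real.exp (-s) := by
    intro s hs
    have hxl := hlast s hs
    have hexp1 : Real.exp (-s) ≤ 1 := by
      have := Real.exp_le_exp.mpr (neg_nonpos.mpr hs)
      rwa [Real.exp_zero] at this
    have hexpnn : 0 ≤ Real.exp (-s) := (Real.exp_pos _).le
    have hm1 : |∑ k ∈ Finset.univ.filter (fun k : Fin m => k < i), AV i k * x s k.castSucc|
        * |x s (Fin.last m)| ≤ (A1 * C) * (D * Real.exp (-s)) :=
      mul_le_mul (hA1 s hs) hxl (abs_nonneg _) (mul_nonneg hA1nn hC0)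
    have h2 : (x s (Fin.last m))^2 ≤ D^2 * Real.exp (-s) := by
      have ha : (x s (Fin.last m))^2 = |x s (Fin.last m)|^2 := (sq_abs _).symm
      have hb : |x s (Fin.last m)|^2 ≤ (D * Real.exp (-s))^2 :=
        pow_le_pow_left₀ (abs_nonneg _) hxl 2
      have hc : (D * Real.exp (-s))^2 ≤ D^2 * Real.exp (-s) := by
        rw [mul_pow]
        apply mul_le_mul_of_nonneg_left _ (sq_nonneg D)
        nlinarith [hexpnn, hexp1]
      linarith
    rw [hε1]
    simp only
    have habs := abs_add_le
      (T * (∑ k ∈ Finset.univ.filter (fun k : Fin m => k < i), AV i k * x s k.castSucc)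
        * x s (Fin.last m))
      (T * (x s (Fin.last m))^2 * gi)
    have e1 : |T * (∑ k ∈ Finset.univ.filter (fun k : Fin m => k < i),
        AV i k * x s k.castSucc) * x s (Fin.last m)|
        = T * (|∑ k ∈ Finset.univ.filter (fun k : Fin m => k < i), AV i k * x s k.castSucc|
            * |x s (Fin.last m)|) := by
      rw [abs_mul, abs_mul, abs_of_pos hT, mul_assoc]
    have e2 : |T * (x s (Fin.last m))^2 * gi| = T * ((x s (Fin.last m))^2 * |gi|) := by
      rw [abs_mul, abs_mul, abs_of_pos hT, abs_of_nonneg (sq_nonneg _), mul_assoc]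
    have hm2 : (x s (Fin.last m))^2 * |gi| ≤ (D^2 * Real.exp (-s)) * |gi| :=
      mul_le_mul_of_nonneg_right h2 (abs_nonneg _)
    rw [hKedef]
    calc |T * (∑ k ∈ Finset.univ.filter (fun k : Fin m => k < i), AV i k * x s k.castSucc)
          * x s (Fin.last m) + T * (x s (Fin.last m))^2 * gi|
        ≤ |T * (∑ k ∈ Finset.univ.filter (fun k : Fin m => k < i), AV i k * x s k.castSucc)
            * x s (Fin.last m)| + |T * (x s (Fin.last m))^2 * gi| := habs
      _ ≤ T * ((A1 * C) * (D * Real.exp (-s))) + T * ((D^2 * Real.exp (-s)) * |gi|) := by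
          rw [e1, e2]
          have := mul_le_mul_of_nonneg_left hm1 hT.le
          have := mul_le_mul_of_nonneg_left hm2 hT.le
          linarith
      _ = (T * (A1 * C) * D + T * D^2 * |gi|) * Real.exp (-s) := by ring
  -- choose a time s₀ after which the perturbations are small
  obtain ⟨Kb, hKbdef⟩ : ∃ Kb : ℝ, Kb = |T * AV i i| * D := ⟨_, rfl⟩
  have hβb' : ∀ s, 0 ≤ s → |β s| ≤ Kb * Real.exp (-s) := by
    intro s hs; rw [hKbdef]; exact hβb s hs
  have hKbt : Filter.Tendsto (fun s : ℝ => Kb * Real.exp (-s)) Filter.atTop (nhds 0) := by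
    simpa using Real.tendsto_exp_neg_atTop_nhds_zero.const_mul Kb
  have hKet : Filter.Tendsto (fun s : ℝ => Ke * Real.exp (-s)) Filter.atTop (nhds 0) := by
    simpa using Real.tendsto_exp_neg_atTop_nhds_zero.const_mul Ke
  have hev := ((hKbt.eventually_lt_const (by norm_num : (0:ℝ) < 1/2)).and
      (hKet.eventually_lt_const (by norm_num : (0:ℝ) < 1))).and
      (Filter.eventually_ge_atTop (0:ℝ))
  obtain ⟨s₀, hs₀⟩ := Filter.eventually_atTop.mp hev
  have hs₀0 : 0 ≤ s₀ := (hs₀ s₀ (le_refl s₀)).2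
  have hsmall : ∀ s, s₀ ≤ s → |β s| ≤ 1/2 ∧ |ε1 s| ≤ 1 ∧ 0 ≤ s := by
    intro s hs
    obtain ⟨⟨h1, h2⟩, h3⟩ := hs₀ s hs
    exact ⟨le_trans (hβb' s h3) h1.le, le_trans (hε1b s h3) h2.le, h3⟩
  have hud' : ∀ s, s₀ ≤ s → HasDerivAt u (dd s) s := fun s hs => hud s (le_trans hs₀0 hs)
  -- lower bound for all time s ≥ s₀
  obtain ⟨α₀, hα₀def⟩ : ∃ α₀ : ℝ, α₀ = min (u s₀) (-4) - 1 := ⟨_, rfl⟩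
  have hα₀lt : α₀ < -4 := by
    rw [hα₀def]; linarith [min_le_right (u s₀) (-4:ℝ)]
  have hdlow : ∀ s, s₀ ≤ s → u s ∈ Set.Icc α₀ (-4) → 0 < dd s := by
    intro s hs hmem
    obtain ⟨hβs, hεs, hs0⟩ := hsmall s hs
    have hβ2 := abs_le.mp hβs
    have hε2 := abs_le.mp hεs
    have h1 : 0 ≤ (T/2) * χ * (u s)^2 :=
      mul_nonneg (mul_nonneg (by linarith) hχnn) (sq_nonneg _)
    have h2 : 0 ≤ (1/2 - β s) * (- u s) :=
      mul_nonneg (by linarith) (by linarith [hmem.2])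
    rw [hddeq]
    nlinarith [hmem.2, h1, h2, hβ2.1, hβ2.2, hε2.1]
  have hlow := stayAbove hα₀lt hud' hdlow (le_refl s₀)
    (by rw [hα₀def]; linarith [min_le_left (u s₀) (-4:ℝ)])
  -- upper bound for all time s ≥ s₀
  have hupper : ∃ Bp, ∀ s, s₀ ≤ s → u s < Bp := by
    by_cases hiI : i ∈ I
    · -- quadratic case: blow-up contradiction forces u < M
      have hχ1 : χ = 1 := by rw [hχ, if_pos hiI]
      obtain ⟨M, hMdef⟩ : ∃ M : ℝ, M = max (12/T) 1 + 1 := ⟨_, rfl⟩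
      have hM1 : 1 ≤ M - 1 := by rw [hMdef]; simp [le_max_right]
      have hM12 : 12/T ≤ M - 1 := by rw [hMdef]; simp [le_max_left]
      have hquadlow : ∀ s, s₀ ≤ s → M - 1 ≤ u s → T/4 * (u s)^2 ≤ dd s := by
        intro s hs hMu
        obtain ⟨hβs, hεs, hs0⟩ := hsmall s hs
        have hβ2 := abs_le.mp hβs
        have hε2 := abs_le.mp hεs
        have h1u : 1 ≤ u s := le_trans hM1 hMu
        have h12 : 12 ≤ u s * T := by
          rw [div_le_iff₀ hT] at hM12
          nlinarith [mul_le_mul_of_nonneg_right hMu hT.le]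
        have hTu : 12 * u s ≤ (u s * T) * u s :=
          mul_le_mul_of_nonneg_right h12 (by linarith)
        have h2 : 0 ≤ (β s + 1/2) * (u s) :=
          mul_nonneg (by linarith) (by linarith)
        rw [hddeq, hχ1]
        linarith [hTu, h2, hε2.1, h1u]
      have hub : ∀ s, s₀ ≤ s → u s < M := by
        by_contra hcon
        push_neg at hcon
        obtain ⟨s₁, hs₁ge, hs₁M⟩ := hcon
        have hstay := stayAbove (show M - 1 < M by linarith) hud'
          (fun s hs hmem => by
            have hq := hquadlow s hs hmem.1
            have : 0 < T/4 * (u s)^2 :=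
              mul_pos (by linarith) (pow_pos (by linarith [hmem.1]) 2)
            linarith)
          hs₁ge (by linarith)
        have hvd : ∀ τ, s₁ ≤ τ → HasDerivAt (fun t => -(u t)⁻¹) (dd τ / (u τ)^2) τ := by
          intro τ hτ
          have hge := hstay τ hτ
          have hne : u τ ≠ 0 := by linarith
          have := ((hud' τ (le_trans hs₁ge hτ)).inv hne).neg
          exact this.congr_deriv (by ring)
        have hvlb : ∀ τ, s₁ ≤ τ → T/4 ≤ dd τ / (u τ)^2 := by
          intro τ hτ
          have hge := hstay τ hτ
          rw [le_div_iff₀ (pow_pos (by linarith) 2)]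
          exact hquadlow τ (le_trans hs₁ge hτ) (hge.le)
        have hgrow := derivGrowth hvd hvlb
        have h8T : 0 < 8/T := by positivity
        have := hgrow (s₁ + 8/T) (by linarith)
        have hcalc : T/4 * (s₁ + 8/T - s₁) = 2 := by
          field_simp
          ring
        rw [hcalc] at this
        have hv1 : (u s₁)⁻¹ ≤ 1 := by
          apply inv_le_one_of_one_le₀
          linarith
        have hvτpos : 0 < (u (s₁ + 8/T))⁻¹ := by
          have := hstay (s₁ + 8/T) (by linarith)
          exact inv_pos.mpr (by linarith)
        linarith
      exact ⟨M, hub⟩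
    · -- linear case: stayBelow
      have hχ0 : χ = 0 := by rw [hχ, if_neg hiI]
      obtain ⟨Bp, hBpdef⟩ : ∃ Bp : ℝ, Bp = max (u s₀) 4 + 1 := ⟨_, rfl⟩
      have hdhigh : ∀ s, s₀ ≤ s → u s ∈ Set.Icc 4 Bp → dd s < 0 := by
        intro s hs hmem
        obtain ⟨hβs, hεs, hs0⟩ := hsmall s hs
        have hβ2 := abs_le.mp hβs
        have hε2 := abs_le.mp hεs
        have h2 : 0 ≤ (1/2 - β s) * (u s) :=
          mul_nonneg (by linarith) (by linarith [hmem.1])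
        rw [hddeq, hχ0]
        nlinarith [hmem.1, h2, hε2.2]
      have h4Bp : (4:ℝ) < Bp := by
        rw [hBpdef]; linarith [le_max_right (u s₀) (4:ℝ)]
      have := stayBelow h4Bp hud' hdhigh (le_refl s₀)
        (by rw [hBpdef]; linarith [le_max_left (u s₀) (4:ℝ)])
      exact ⟨Bp, this⟩
  obtain ⟨Bp, hBp⟩ := hupper
  -- bound on the compact piece [0, s₀]
  have hucont : ContinuousOn u (Set.Icc 0 s₀) :=
    fun t ht => ((hud t ht.1).continuousAt).continuousWithinAt
  obtain ⟨B0, hB0⟩ := isCompact_Icc.exists_bound_of_continuousOn hucont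
  have hB0' : ∀ t ∈ Set.Icc (0:ℝ) s₀, |u t| ≤ B0 := by
    intro t ht
    have := hB0 t ht
    rwa [Real.norm_eq_abs] at this
  obtain ⟨Ci, hCidef⟩ : ∃ Ci : ℝ, Ci = max B0 (max (-α₀) Bp) := ⟨_, rfl⟩
  refine ⟨Ci, ?_, ?_⟩
  · have : 0 ≤ B0 := le_trans (abs_nonneg _) (hB0' 0 ⟨le_refl 0, hs₀0⟩)
    rw [hCidef]
    exact le_trans this (le_max_left _ _)
  · intro s hs
    have hxu : x s (Fin.castSucc ⟨N, hNm⟩) = u s := by rw [hu_def, hidef]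
    rw [hxu]
    rcases le_or_gt s s₀ with hcase | hcase
    · have := hB0' s ⟨hs, hcase⟩
      rw [hCidef]
      exact le_trans this (le_max_left _ _)
    · have h1 := hlow s hcase.le
      have h2 := hBp s hcase.le
      rw [hCidef]
      rw [abs_le]
      constructor
      · have : -α₀ ≤ max B0 (max (-α₀) Bp) :=
          le_trans (le_max_left _ _) (le_max_right _ _)
        linarith
      · have : Bp ≤ max B0 (max (-α₀) Bp) :=
          le_trans (le_max_right _ _) (le_max_right _ _)
        linarith

end Global

-- ===== global: bounded and convergent =====
section Global2
open Set Metric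

variable {m n : ℕ} {I : Finset (Fin m)} {AV : Matrix (Fin m) (Fin m) ℝ}
    {π : Fin m → Matrix (Fin n) (Fin n) ℝ} {AC : Matrix (Fin m) (Fin n) ℝ}
    {T : ℝ} {w : Fin n → ℝ}

lemma last_coord_decay {x : ℝ → Fin (m + 1) → ℝ}
    (hsol : ∀ s : ℝ, 0 ≤ s → HasDerivAt x (Fq I AV π AC T w (x s)) s) :
    ∀ s, 0 ≤ s → x s (Fin.last m) = x 0 (Fin.last m) * Real.exp (-s) := by
  apply expSolution
  intro s hs
  have h := hasDerivAt_proj (hsol s hs) (Fin.last m)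
  rwa [Fq_last] at h

lemma global_bounded (hT : 0 < T) {x : ℝ → Fin (m + 1) → ℝ}
    (hsol : ∀ s : ℝ, 0 ≤ s → HasDerivAt x (Fq I AV π AC T w (x s)) s) :
    ∃ C, 0 ≤ C ∧ ∀ s, 0 ≤ s → ‖x s‖ ≤ C := by
  have hlasteq := last_coord_decay hsol
  obtain ⟨D, hDdef⟩ : ∃ D : ℝ, D = |x 0 (Fin.last m)| := ⟨_, rfl⟩
  have hD : 0 ≤ D := hDdef ▸ abs_nonneg _
  have hlast : ∀ s, 0 ≤ s → |x s (Fin.last m)| ≤ D * Real.exp (-s) := by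
    intro s hs
    rw [hlasteq s hs, abs_mul, abs_of_pos (Real.exp_pos _), hDdef]
  have key : ∀ N : ℕ, ∃ C, 0 ≤ C ∧ ∀ s, 0 ≤ s → ∀ k : Fin m, (k : ℕ) < N →
      |x s k.castSucc| ≤ C := by
    intro N
    induction N with
    | zero => exact ⟨0, le_refl 0, fun s hs k hk => absurd hk (by omega)⟩
    | succ N ih =>
      obtain ⟨C, hC0, hC⟩ := ih
      by_cases hNm : N < m
      · obtain ⟨Ci, hCi0, hCi⟩ := global_coord_bound hT hsol hD hlast hNm hC0 hC
        refine ⟨max C Ci, le_trans hC0 (le_max_left _ _), fun s hs k hk => ?_⟩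
        rcases Nat.lt_succ_iff_lt_or_eq.mp hk with h | h
        · exact le_trans (hC s hs k h) (le_max_left _ _)
        · have hkeq : k = ⟨N, hNm⟩ := Fin.ext h
          rw [hkeq]
          exact le_trans (hCi s hs) (le_max_right _ _)
      · refine ⟨C, hC0, fun s hs k hk => hC s hs k ?_⟩
        have := k.isLt
        omega
  obtain ⟨C, hC0, hC⟩ := key m
  refine ⟨max C D, le_trans hC0 (le_max_left _ _), fun s hs => ?_⟩
  rw [pi_norm_le_iff_of_nonneg (le_trans hC0 (le_max_left _ _))]
  intro j
  rw [Real.norm_eq_abs]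
  by_cases hj : (j : ℕ) < m
  · have hcast : j = (⟨(j : ℕ), hj⟩ : Fin m).castSucc := by apply Fin.ext; simp
    rw [hcast]
    exact le_trans (hC s hs ⟨(j : ℕ), hj⟩ hj) (le_max_left _ _)
  · have hjlast : j = Fin.last m := by
      apply Fin.ext
      have := j.isLt
      simp only [Fin.val_last]
      omega
    rw [hjlast]
    have h1 := hlast s hs
    have hexp1 : Real.exp (-s) ≤ 1 := by
      have := Real.exp_le_exp.mpr (neg_nonpos.mpr hs)
      rwa [Real.exp_zero] at this
    have h2 : D * Real.exp (-s) ≤ D := by nlinarith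
    exact le_trans (le_trans h1 h2) (le_max_right _ _)

lemma global_converges (hT : 0 < T) {x : ℝ → Fin (m + 1) → ℝ}
    (hsol : ∀ s : ℝ, 0 ≤ s → HasDerivAt x (Fq I AV π AC T w (x s)) s)
    {C : ℝ} (hC0 : 0 ≤ C) (hCb : ∀ s, 0 ≤ s → ‖x s‖ ≤ C) :
    ∃ p : Fin (m + 1) → ℝ, (∀ i, Fq I AV π AC T w p i = 0) ∧
      Filter.Tendsto x Filter.atTop (nhds p) := by
  have hlasteq := last_coord_decay hsol
  obtain ⟨D, hDdef⟩ : ∃ D : ℝ, D = |x 0 (Fin.last m)| := ⟨_, rfl⟩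
  have hD : 0 ≤ D := hDdef ▸ abs_nonneg _
  have hlast : ∀ s, 0 ≤ s → |x s (Fin.last m)| ≤ D * Real.exp (-s) := by
    intro s hs
    rw [hlasteq s hs, abs_mul, abs_of_pos (Real.exp_pos _), hDdef]
  have hcoordb : ∀ (j : Fin (m + 1)) s, 0 ≤ s → |x s j| ≤ C := by
    intro j s hs
    have := norm_le_pi_norm (x s) j
    rw [Real.norm_eq_abs] at this
    exact le_trans this (hCb s hs)
  have hcoord : ∀ i : Fin m, ∃ r : ℝ,
      ((T / 2) * (if i ∈ I then (1:ℝ) else 0)) * r ^ 2 - r = 0 ∧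
      Filter.Tendsto (fun s => x s i.castSucc) Filter.atTop (nhds r) := by
    intro i
    obtain ⟨a, hadef⟩ : ∃ a : ℝ, a = (T / 2) * (if i ∈ I then (1:ℝ) else 0) := ⟨_, rfl⟩
    have ha : 0 ≤ a := by
      rw [hadef]
      apply mul_nonneg (by linarith)
      split <;> norm_num
    obtain ⟨εi, hεidef⟩ : ∃ e : ℝ → ℝ, e = fun s =>
        T * (∑ k ∈ Finset.univ.filter (fun k : Fin m => k ≤ i), AV i k * x s k.castSucc)
          * x s (Fin.last m) + T * (x s (Fin.last m)) ^ 2 * gfun π AC w i := ⟨_, rfl⟩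
    have hu : ∀ s, 0 ≤ s → HasDerivAt (fun t => x t i.castSucc)
        (a * (x s i.castSucc) ^ 2 - x s i.castSucc + εi s) s := by
      intro s hs
      have h := hasDerivAt_proj (hsol s hs) i.castSucc
      rw [Fq_castSucc] at h
      convert h using 1
      rw [hadef, hεidef]
      ring
    obtain ⟨A1, hA1def⟩ : ∃ A1 : ℝ, A1 = ∑ k ∈ Finset.univ.filter (fun k : Fin m => k ≤ i),
        |AV i k| := ⟨_, rfl⟩
    have hA1nn : 0 ≤ A1 := by
      rw [hA1def]; exact Finset.sum_nonneg (fun _ _ => abs_nonneg _)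
    have hA1 : ∀ s, 0 ≤ s →
        |∑ k ∈ Finset.univ.filter (fun k : Fin m => k ≤ i), AV i k * x s k.castSucc|
          ≤ A1 * C := by
      intro s hs
      calc |∑ k ∈ Finset.univ.filter (fun k : Fin m => k ≤ i), AV i k * x s k.castSucc|
          ≤ ∑ k ∈ Finset.univ.filter (fun k : Fin m => k ≤ i), |AV i k * x s k.castSucc| :=
            Finset.abs_sum_le_sum_abs _ _
        _ ≤ ∑ k ∈ Finset.univ.filter (fun k : Fin m => k ≤ i), |AV i k| * C := by
            apply Finset.sum_le_sum
            intro k hk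
            rw [abs_mul]
            exact mul_le_mul_of_nonneg_left (hcoordb k.castSucc s hs) (abs_nonneg _)
        _ = A1 * C := by rw [hA1def, Finset.sum_mul]
    have hε : ∀ s, 0 ≤ s → |εi s| ≤
        (T * (A1 * C) * D + T * D ^ 2 * |gfun π AC w i|) * Real.exp (-s) := by
      intro s hs
      have hxl := hlast s hs
      have hexp1 : Real.exp (-s) ≤ 1 := by
        have := Real.exp_le_exp.mpr (neg_nonpos.mpr hs)
        rwa [Real.exp_zero] at this
      have hexpnn : 0 ≤ Real.exp (-s) := (Real.exp_pos _).le
      have hm1 : |∑ k ∈ Finset.univ.filter (fun k : Fin m => k ≤ i), AV i k * x s k.castSucc|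
          * |x s (Fin.last m)| ≤ (A1 * C) * (D * Real.exp (-s)) :=
        mul_le_mul (hA1 s hs) hxl (abs_nonneg _) (mul_nonneg hA1nn hC0)
      have h2 : (x s (Fin.last m)) ^ 2 ≤ D ^ 2 * Real.exp (-s) := by
        have ha' : (x s (Fin.last m)) ^ 2 = |x s (Fin.last m)| ^ 2 := (sq_abs _).symm
        have hb : |x s (Fin.last m)| ^ 2 ≤ (D * Real.exp (-s)) ^ 2 :=
          pow_le_pow_left₀ (abs_nonneg _) hxl 2
        have hc : (D * Real.exp (-s)) ^ 2 ≤ D ^ 2 * Real.exp (-s) := by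
          rw [mul_pow]
          apply mul_le_mul_of_nonneg_left _ (sq_nonneg D)
          nlinarith [hexpnn, hexp1]
        linarith
      have hm2 : (x s (Fin.last m)) ^ 2 * |gfun π AC w i|
          ≤ (D ^ 2 * Real.exp (-s)) * |gfun π AC w i| :=
        mul_le_mul_of_nonneg_right h2 (abs_nonneg _)
      rw [hεidef]
      simp only
      have e1 : |T * (∑ k ∈ Finset.univ.filter (fun k : Fin m => k ≤ i),
          AV i k * x s k.castSucc) * x s (Fin.last m)|
          = T * (|∑ k ∈ Finset.univ.filter (fun k : Fin m => k ≤ i), AV i k * x s k.castSucc|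
              * |x s (Fin.last m)|) := by
        rw [abs_mul, abs_mul, abs_of_pos hT, mul_assoc]
      have e2 : |T * (x s (Fin.last m)) ^ 2 * gfun π AC w i|
          = T * ((x s (Fin.last m)) ^ 2 * |gfun π AC w i|) := by
        rw [abs_mul, abs_mul, abs_of_pos hT, abs_of_nonneg (sq_nonneg _), mul_assoc]
      calc |T * (∑ k ∈ Finset.univ.filter (fun k : Fin m => k ≤ i), AV i k * x s k.castSucc)
            * x s (Fin.last m) + T * (x s (Fin.last m)) ^ 2 * gfun π AC w i|
          ≤ |T * (∑ k ∈ Finset.univ.filter (fun k : Fin m => k ≤ i), AV i k * x s k.castSucc)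
              * x s (Fin.last m)| + |T * (x s (Fin.last m)) ^ 2 * gfun π AC w i| :=
            abs_add_le _ _
        _ ≤ T * ((A1 * C) * (D * Real.exp (-s))) + T * ((D ^ 2 * Real.exp (-s))
              * |gfun π AC w i|) := by
            have k1 := mul_le_mul_of_nonneg_left hm1 hT.le
            have k2 := mul_le_mul_of_nonneg_left hm2 hT.le
            rw [e1, e2]
            linarith
        _ = (T * (A1 * C) * D + T * D ^ 2 * |gfun π AC w i|) * Real.exp (-s) := by ring
    obtain ⟨r, hr1, hr2⟩ := scalarConv ha hu hε (hcoordb i.castSucc)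
    refine ⟨r, ?_, hr2⟩
    rw [← hadef]
    exact hr1
  choose r hroot htendr using hcoord
  obtain ⟨p, hpdef⟩ : ∃ p : Fin (m + 1) → ℝ,
      p = fun j : Fin (m+1) => if hj : (j : ℕ) < m then r ⟨(j : ℕ), hj⟩ else 0 := ⟨_, rfl⟩
  have hplast : p (Fin.last m) = 0 := by
    rw [hpdef]
    simp only [Fin.val_last]
    rw [dif_neg (lt_irrefl m)]
  have hpcast : ∀ i : Fin m, p i.castSucc = r i := by
    intro i
    rw [hpdef]
    simp only [Fin.coe_castSucc]
    rw [dif_pos i.isLt]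
  refine ⟨p, ?_, ?_⟩
  · intro j
    by_cases hj : (j : ℕ) < m
    · have hcast : j = (⟨(j : ℕ), hj⟩ : Fin m).castSucc := by apply Fin.ext; simp
      rw [hcast, Fq_castSucc, hplast, hpcast]
      have := hroot ⟨(j : ℕ), hj⟩
      ring_nf
      ring_nf at this
      linarith
    · have hjlast : j = Fin.last m := by
        apply Fin.ext
        have := j.isLt
        simp only [Fin.val_last]
        omega
      rw [hjlast, Fq_last, hplast, neg_zero]
  · rw [tendsto_pi_nhds]
    intro j
    by_cases hj : (j : ℕ) < m
    · have hcast : j = (⟨(j : ℕ), hj⟩ : Fin m).castSucc := by apply Fin.ext; simp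
      rw [hcast, hpcast]
      exact htendr ⟨(j : ℕ), hj⟩
    · have hjlast : j = Fin.last m := by
        apply Fin.ext
        have := j.isLt
        simp only [Fin.val_last]
        omega
      rw [hjlast, hplast]
      have htend0 : Filter.Tendsto (fun s : ℝ => x 0 (Fin.last m) * Real.exp (-s))
          Filter.atTop (nhds 0) := by
        simpa using Real.tendsto_exp_neg_atTop_nhds_zero.const_mul (x 0 (Fin.last m))
      apply htend0.congr'
      filter_upwards [Filter.eventually_ge_atTop (0:ℝ)] with s hs
      exact (hlasteq s hs).symm

end Global2

/-- a maximal solution of (quadODE) with bounded trajectory is global and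
converges to an equilibrium point; a maximal solution with unbounded trajectory blows up
in finite time. -/
theorem stmt13 (m n : ℕ) (hm : 1 ≤ m)
    (I : Finset (Fin m)) (hI : I.Nonempty)
    (AV : Matrix (Fin m) (Fin m) ℝ)
    (hAVtri : ∀ i k : Fin m, i < k → AV i k = 0)
    (hAVdiag : ∀ i : Fin m, AV i i < 0)
    (hAVoff : ∀ i k : Fin m, i ≠ k → 0 ≤ AV i k)
    (π : Fin m → Matrix (Fin n) (Fin n) ℝ)
    (hπ : ∀ i, (π i).PosSemidef)
    (AC : Matrix (Fin m) (Fin n) ℝ)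
    (T : ℝ) (hT : 0 < T) (w : Fin n → ℝ)
    (x : ℝ → Fin (m + 1) → ℝ) (S : ℝ≥0∞)
    (hx : IsMaxSol (fun z => Fq I AV π AC T w z) x S) :
    ((∃ C : ℝ, ∀ s : ℝ, 0 ≤ s → ENNReal.ofReal s < S → ‖x s‖ ≤ C) →
      S = ⊤ ∧ ∃ p : Fin (m + 1) → ℝ, (∀ i, Fq I AV π AC T w p i = 0) ∧
        Filter.Tendsto x Filter.atTop (nhds p))
    ∧ ((¬ ∃ C : ℝ, ∀ s : ℝ, 0 ≤ s → ENNReal.ofReal s < S → ‖x s‖ ≤ C) →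
      ∃ Sstar : ℝ, 0 < Sstar ∧ S = ENNReal.ofReal Sstar ∧
        Filter.Tendsto (fun s => ‖x s‖) (nhdsWithin Sstar (Set.Iio Sstar)) Filter.atTop) := by
  obtain ⟨hSpos, hsol, hmax⟩ := hx
  by_cases hS : S = ⊤
  · -- the solution is global
    have hsol' : ∀ s : ℝ, 0 ≤ s → HasDerivAt x (Fq I AV π AC T w (x s)) s := by
      intro s hs
      exact hsol s hs (by rw [hS]; exact ENNReal.ofReal_lt_top)
    constructor
    · rintro ⟨C, hC⟩
      have hCb : ∀ s, 0 ≤ s → ‖x s‖ ≤ C := fun s hs =>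
        hC s hs (by rw [hS]; exact ENNReal.ofReal_lt_top)
      have hC0 : 0 ≤ C := le_trans (norm_nonneg _) (hCb 0 (le_refl 0))
      obtain ⟨p, hp1, hp2⟩ := global_converges hT hsol' hC0 hCb
      exact ⟨hS, p, hp1, hp2⟩
    · intro hnb
      exfalso
      obtain ⟨C, hC0, hC⟩ := global_bounded hT hsol'
      exact hnb ⟨C, fun s hs _ => hC s hs⟩
  · -- the lifetime is finite
    obtain ⟨Sstar, hSstardef⟩ : ∃ Sstar : ℝ, Sstar = S.toReal := ⟨_, rfl⟩
    have hSeq : S = ENNReal.ofReal Sstar := by rw [hSstardef, ENNReal.ofReal_toReal hS]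
    have hSstarpos : 0 < Sstar := by
      rw [hSstardef]
      exact ENNReal.toReal_pos (ne_of_gt hSpos) hS
    have hsol'' : ∀ t : ℝ, 0 ≤ t → t < Sstar → HasDerivAt x (Fq I AV π AC T w (x t)) t := by
      intro t ht htlt
      apply hsol t ht
      rw [hSeq]
      exact (ENNReal.ofReal_lt_ofReal_iff hSstarpos).mpr htlt
    have hmax' : ∀ (z : ℝ → Fin (m + 1) → ℝ) (T' : ℝ≥0∞), ENNReal.ofReal Sstar < T' →
        SolOn (fun z => Fq I AV π AC T w z) z T' → z 0 ≠ x 0 := by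
      intro z T' h1 h2
      refine hmax z T' ?_ h2
      rw [hSeq]
      exact h1
    have hFc : ContDiff ℝ 1 (fun z => Fq I AV π AC T w z) := Fq_contDiff I AV π AC T w
    have hblow : Filter.Tendsto (fun s => ‖x s‖) (nhdsWithin Sstar (Set.Iio Sstar))
        Filter.atTop := by
      by_contra hcon
      rw [Filter.tendsto_atTop] at hcon
      push_neg at hcon
      obtain ⟨R, hR⟩ := hcon
      apply maxsol_finite_blowup hFc hSstarpos hsol'' hmax' (R := R)
      intro η hη
      have hmem : Set.Ioo (Sstar - min η Sstar) Sstar ∈ nhdsWithin Sstar (Set.Iio Sstar) :=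
        Ioo_mem_nhdsLT_of_mem ⟨by linarith [lt_min hη hSstarpos], le_refl _⟩
      have hev : ∀ᶠ s in nhdsWithin Sstar (Set.Iio Sstar),
          s ∈ Set.Ioo (Sstar - min η Sstar) Sstar := hmem
      obtain ⟨s, hs1, hs2⟩ := (hR.and_eventually hev).exists
      refine ⟨s, ?_, ?_, hs2.2, hs1.le⟩
      · linarith [hs2.1, min_le_right η Sstar]
      · linarith [hs2.1, min_le_left η Sstar]
    constructor
    · rintro ⟨C, hC⟩
      exfalso
      apply maxsol_finite_blowup hFc hSstarpos hsol'' hmax' (R := C)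
      intro η hη
      have hm := lt_min hη hSstarpos
      have hℓ := min_le_left η Sstar
      have hr := min_le_right η Sstar
      refine ⟨Sstar - min η Sstar / 2, by linarith, by linarith, by linarith, ?_⟩
      apply hC _ (by linarith)
      rw [hSeq]
      exact (ENNReal.ofReal_lt_ofReal_iff hSstarpos).mpr (by linarith)
    · intro _
      exact ⟨Sstar, hSstarpos, hSeq, hblow⟩

end
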